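/- Let f be a transcendental entire function and let R > 0 be such that M(r, f) > r for all r ≥ R. If A_R(f) is a spider's web and K is a connected component of the complement of A(f), then f(K) is also a connected component of the complement of A(f). -/

import Mathlib

open Set Metric Topology Function Bornology

/-- The maximum modulus `M(r, f)` of `f` on the circle `|z| = r`. -/
noncomputable def maxMod (f : ℂ → ℂ) (r : ℝ) : ℝ :=
  sSup ((fun z => ‖f z‖) '' Metric.sphere (0 : ℂ) r)

/-- `f` is a transcendental entire function: holomorphic on all of `ℂ` and not a polynomial. -/
def TranscEntire (f : ℂ → ℂ) : Prop :=
  Differentiable ℂ f ∧ ¬ ∃ p : Polynomial ℂ, ∀ z, f z = p.eval z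

/-- The fast escaping set `A(f)` (with parameter `R`). -/
def fastEscaping (f : ℂ → ℂ) (R : ℝ) : Set ℂ :=
  {z | ∃ L : ℕ, ∀ n : ℕ, (maxMod f)^[n] R ≤ ‖f^[n + L] z‖}

/-- The `L`-th level `A_R^L(f)` of the fast escaping set. -/
def levelSet (f : ℂ → ℂ) (R : ℝ) (L : ℤ) : Set ℂ :=
  {z | ∀ n : ℕ, 0 ≤ (n : ℤ) + L →
    (maxMod f)^[((n : ℤ) + L).toNat] R ≤ ‖f^[n] z‖}

/-- `E ⊆ ℂ` is an (infinite) spider's web. -/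
def SpidersWeb (E : Set ℂ) : Prop :=
  IsConnected E ∧ ∃ G : ℕ → Set ℂ,
    (∀ n, IsOpen (G n) ∧ IsConnected (G n) ∧ Bornology.IsBounded (G n) ∧
      SimplyConnectedSpace (G n) ∧ G n ⊆ G (n + 1) ∧ frontier (G n) ⊆ E) ∧
    (⋃ n, G n) = Set.univ

/-- `K` is a connected component of the set `S`. -/
def IsCompOf {X : Type*} [TopologicalSpace X] (K S : Set X) : Prop :=
  ∃ z ∈ S, K = connectedComponentIn S z

/-- The `n`-th fundamental hole for `A_R(f)`: the component of the complement of
`A_R^n(f)` containing `0`. -/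
noncomputable def fundHole (f : ℂ → ℂ) (R : ℝ) (n : ℤ) : Set ℂ :=
  connectedComponentIn (levelSet f R n)ᶜ 0

/-- The `n`-th fundamental loop for `A_R(f)`. -/
noncomputable def fundLoop (f : ℂ → ℂ) (R : ℝ) (n : ℤ) : Set ℂ :=
  frontier (fundHole f R n)


section MaxMod
variable {f : ℂ → ℂ}

lemma bddAbove_maxMod (hf : Differentiable ℂ f) (r : ℝ) :
    BddAbove ((fun z => ‖f z‖) '' Metric.sphere (0 : ℂ) r) :=
  ((isCompact_sphere (0:ℂ) r).image
      (continuous_norm.comp hf.continuous)).bddAbove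

lemma abs_apply_le_maxMod (hf : Differentiable ℂ f) (w : ℂ) :
    ‖f w‖ ≤ maxMod f (‖w‖) :=
  le_csSup (bddAbove_maxMod hf _) ⟨w, by simp [Complex.dist_eq], rfl⟩

lemma maxMod_nonneg (hf : Differentiable ℂ f) {r : ℝ} (hr : 0 ≤ r) : 0 ≤ maxMod f r := by
  have hw : (r : ℂ) ∈ Metric.sphere (0:ℂ) r := by
    simp [Complex.dist_eq, Complex.norm_real, abs_of_nonneg hr]
  calc (0:ℝ) ≤ ‖f r‖ := norm_nonneg _
    _ ≤ maxMod f r := le_csSup (bddAbove_maxMod hf _) ⟨r, hw, rfl⟩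

lemma maxMod_mono (hf : Differentiable ℂ f) {r r' : ℝ} (h0 : 0 ≤ r) (h : r ≤ r') :
    maxMod f r ≤ maxMod f r' := by
  rcases eq_or_lt_of_le h with rfl | hlt
  · exact le_rfl
  have hr' : (0:ℝ) < r' := lt_of_le_of_lt h0 hlt
  have hne : (Metric.sphere (0:ℂ) r).Nonempty := by
    refine ⟨(r : ℂ), by simp [Complex.dist_eq, Complex.norm_real, abs_of_nonneg h0]⟩
  apply csSup_le (hne.image _)
  rintro x ⟨w, hw, rfl⟩
  -- max modulus principle on ball 0 r'
  have hU : Bornology.IsBounded (Metric.ball (0:ℂ) r') := Metric.isBounded_ball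
  have hd : DiffContOnCl ℂ f (Metric.ball (0:ℂ) r') := hf.diffContOnCl
  have hfr : ∀ z ∈ frontier (Metric.ball (0:ℂ) r'), ‖f z‖ ≤ maxMod f r' := by
    intro z hz
    rw [frontier_ball (0:ℂ) (ne_of_gt hr')] at hz
    exact le_csSup (bddAbove_maxMod hf _) ⟨z, hz, rfl⟩
  have hcl : w ∈ closure (Metric.ball (0:ℂ) r') := by
    rw [closure_ball (0:ℂ) (ne_of_gt hr')]
    have : ‖w‖ = r := by simpa [Complex.dist_eq] using hw
    simp [Metric.mem_closedBall, Complex.dist_eq, this, h]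
  simpa using Complex.norm_le_of_forall_mem_frontier_norm_le hU hd hfr hcl
end MaxMod

section Mi
variable {f : ℂ → ℂ} {R : ℝ}

/-- `R ≤ M^[k] R` -/
lemma le_Mi (hR : 0 < R) (hM : ∀ r ≥ R, r < maxMod f r) (k : ℕ) :
    R ≤ (maxMod f)^[k] R := by
  induction k with
  | zero => simp
  | succ k ih =>
      rw [Function.iterate_succ_apply']
      exact ih.trans (le_of_lt (hM _ ih))

lemma Mi_strictMono (hR : 0 < R) (hM : ∀ r ≥ R, r < maxMod f r) :
    StrictMono (fun k => (maxMod f)^[k] R) := by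
  apply strictMono_nat_of_lt_succ
  intro k
  rw [Function.iterate_succ_apply']
  exact hM _ (le_Mi hR hM k)

lemma Mi_mono (hR : 0 < R) (hM : ∀ r ≥ R, r < maxMod f r) {a b : ℕ} (h : a ≤ b) :
    (maxMod f)^[a] R ≤ (maxMod f)^[b] R := (Mi_strictMono hR hM).monotone h

lemma Mi_le_iff (hR : 0 < R) (hM : ∀ r ≥ R, r < maxMod f r) {a b : ℕ} :
    (maxMod f)^[a] R ≤ (maxMod f)^[b] R ↔ a ≤ b := (Mi_strictMono hR hM).le_iff_le

/-- iterate bound: `|u| ≤ r → |f^[k] u| ≤ M^[k] r` -/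
lemma abs_iterate_le (hf : Differentiable ℂ f) {u : ℂ} {r : ℝ} (h0 : 0 ≤ r)
    (h : ‖u‖ ≤ r) (k : ℕ) :
    ‖f^[k] u‖ ≤ (maxMod f)^[k] r := by
  induction k with
  | zero => simpa
  | succ k ih =>
      rw [Function.iterate_succ_apply', Function.iterate_succ_apply']
      calc ‖f (f^[k] u)‖ ≤ maxMod f (‖f^[k] u‖) :=
            abs_apply_le_maxMod hf _
        _ ≤ maxMod f ((maxMod f)^[k] r) := maxMod_mono hf (norm_nonneg _) ih

lemma Mi_iter_nonneg (hf : Differentiable ℂ f) {r : ℝ} (h0 : 0 ≤ r) (k : ℕ) :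
    0 ≤ (maxMod f)^[k] r := by
  induction k with
  | zero => simpa
  | succ k ih => rw [Function.iterate_succ_apply']; exact maxMod_nonneg hf ih

lemma Mi_iter_mono (hf : Differentiable ℂ f) {r r' : ℝ} (h0 : 0 ≤ r) (h : r ≤ r') (k : ℕ) :
    (maxMod f)^[k] r ≤ (maxMod f)^[k] r' := by
  induction k with
  | zero => simpa
  | succ k ih =>
      rw [Function.iterate_succ_apply', Function.iterate_succ_apply']
      exact maxMod_mono hf (Mi_iter_nonneg hf h0 k) ih

/-- The iterates of `R` under `maxMod` are unbounded. -/
lemma Mi_unbounded (hf : Differentiable ℂ f) (hR : 0 < R)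
    (hM : ∀ r ≥ R, r < maxMod f r) (c : ℝ) : ∃ k : ℕ, c < (maxMod f)^[k] R := by
  by_contra hb
  push_neg at hb
  set a : ℕ → ℝ := fun k => (maxMod f)^[k] R with ha
  have hmono : Monotone a := (Mi_strictMono hR hM).monotone
  have hbdd : BddAbove (Set.range a) := ⟨c, by rintro x ⟨k, rfl⟩; exact hb k⟩
  set l : ℝ := ⨆ k, a k with hl
  have hak : ∀ k, a k ≤ l := fun k => le_ciSup hbdd k
  have hRl : R ≤ l := (by simpa [ha] using hak 0)
  have hl0 : 0 < l := lt_of_lt_of_le hR hRl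
  have htend : Filter.Tendsto a Filter.atTop (nhds l) := tendsto_atTop_ciSup hmono hbdd
  -- maximum of f on sphere l
  obtain ⟨w₀, hw₀s, hw₀max⟩ := (isCompact_sphere (0:ℂ) l).exists_isMaxOn
    (by exact ⟨(l:ℂ), by simp [Complex.dist_eq, Complex.norm_real, abs_of_nonneg hl0.le]⟩)
    ((continuous_norm.comp hf.continuous).continuousOn)
  have habs : ‖w₀‖ = l := by simpa [Complex.dist_eq] using hw₀s
  have hMl : maxMod f l ≤ ‖f w₀‖ := by
    apply csSup_le (Set.Nonempty.image _ ⟨w₀, hw₀s⟩)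
    rintro x ⟨w, hw, rfl⟩
    exact hw₀max hw
  have hfw₀ : l < ‖f w₀‖ := lt_of_lt_of_le (hM l hRl) hMl
  -- points on spheres a k approaching w₀
  set wk : ℕ → ℂ := fun k => ((a k / l : ℝ) : ℂ) * w₀ with hwk
  have hwk_tend : Filter.Tendsto wk Filter.atTop (nhds w₀) := by
    have h1 : Filter.Tendsto (fun k => (a k / l : ℝ)) Filter.atTop (nhds 1) := by
      simpa [div_self (ne_of_gt hl0)] using htend.div_const l
    have h2 : Filter.Tendsto (fun k => ((a k / l : ℝ) : ℂ)) Filter.atTop (nhds 1) := by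
      have := (Complex.continuous_ofReal.tendsto 1).comp h1
      simpa [Function.comp_def] using this
    have h3 := h2.mul_const w₀
    rw [hwk]
    simpa using h3
  have habsk : ∀ k, ‖wk k‖ = a k := by
    intro k
    have h0k : 0 ≤ a k := le_trans hR.le (le_Mi hR hM k)
    have hdiv : 0 ≤ a k / l := div_nonneg h0k hl0.le
    have heq : ‖wk k‖ = (a k / l) * l := by
      rw [hwk]
      simp only [norm_mul, Complex.norm_real, Real.norm_eq_abs, abs_of_nonneg hdiv, habs]
    rw [heq, div_mul_cancel₀ _ (ne_of_gt hl0)]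
  have htendf : Filter.Tendsto (fun k => ‖f (wk k)‖) Filter.atTop
      (nhds (‖f w₀‖)) :=
    ((continuous_norm.comp hf.continuous).tendsto w₀).comp hwk_tend
  have hev : ∀ᶠ k in Filter.atTop, l < ‖f (wk k)‖ :=
    htendf.eventually (eventually_gt_nhds hfw₀)
  obtain ⟨k, hk⟩ := hev.exists
  have : ‖f (wk k)‖ ≤ a (k+1) := by
    have := abs_apply_le_maxMod hf (wk k)
    rw [habsk k] at this
    simpa [ha, Function.iterate_succ_apply'] using this
  exact absurd (lt_of_lt_of_le hk (this.trans (hak (k+1)))) (lt_irrefl _)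
end Mi

section Levels
variable {f : ℂ → ℂ} {R : ℝ}

lemma isClosed_levelSet (hf : Differentiable ℂ f) (L : ℤ) :
    IsClosed (levelSet f R L) := by
  have : levelSet f R L = ⋂ n : ℕ, {z : ℂ | 0 ≤ (n : ℤ) + L →
      (maxMod f)^[((n : ℤ) + L).toNat] R ≤ ‖f^[n] z‖} := by
    ext z; simp [levelSet, Set.mem_iInter]
  rw [this]
  apply isClosed_iInter
  intro n
  by_cases h : 0 ≤ (n : ℤ) + L
  · have : {z : ℂ | 0 ≤ (n : ℤ) + L →
        (maxMod f)^[((n : ℤ) + L).toNat] R ≤ ‖f^[n] z‖} =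
        {z : ℂ | (maxMod f)^[((n : ℤ) + L).toNat] R ≤ ‖f^[n] z‖} := by
      ext z; simp [h]
    rw [this]
    have hc : Continuous fun z : ℂ => ‖f^[n] z‖ := by
      apply continuous_norm.comp
      exact hf.continuous.iterate n
    exact isClosed_le continuous_const hc
  · have : {z : ℂ | 0 ≤ (n : ℤ) + L →
        (maxMod f)^[((n : ℤ) + L).toNat] R ≤ ‖f^[n] z‖} = Set.univ := by
      ext z; simp [h]
    rw [this]; exact isClosed_univ

end Levels

section Levels2
variable {f : ℂ → ℂ} {R : ℝ}

lemma levelSet_antitone (hR : 0 < R) (hM : ∀ r ≥ R, r < maxMod f r) {m m' : ℤ}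
    (h : m ≤ m') : levelSet f R m' ⊆ levelSet f R m := by
  intro z hz n hn
  have hn' : 0 ≤ (n : ℤ) + m' := le_trans hn (by omega)
  have := hz n hn'
  refine le_trans (Mi_mono hR hM ?_) this
  omega

lemma levelSet_map (z : ℂ) (m : ℤ) (hz : z ∈ levelSet f R m) :
    f z ∈ levelSet f R (m + 1) := by
  intro n hn
  have h1 : 0 ≤ ((n+1 : ℕ) : ℤ) + m := by push_cast; omega
  have := hz (n+1) h1
  rw [Function.iterate_succ_apply] at this
  have he : (((n+1 : ℕ) : ℤ) + m).toNat = ((n : ℤ) + (m + 1)).toNat := by push_cast; omega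
  rw [he] at this
  exact this

lemma levelSet_iterate_map (z : ℂ) (hz : z ∈ levelSet f R 0) (s : ℕ) :
    f^[s] z ∈ levelSet f R s := by
  induction s with
  | zero => simpa
  | succ s ih =>
      rw [Function.iterate_succ_apply']
      have := levelSet_map _ _ ih
      simpa [add_comm] using this

lemma levelSet_unmap (z : ℂ) (m : ℤ) (hm : m + 1 ≤ 0) (hz : f z ∈ levelSet f R (m + 1)) :
    z ∈ levelSet f R m := by
  intro n hn
  have hn1 : 1 ≤ n := by omega
  obtain ⟨k, rfl⟩ : ∃ k, n = k + 1 := ⟨n - 1, by omega⟩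
  have h1 : 0 ≤ (k : ℤ) + (m + 1) := by push_cast at hn ⊢; omega
  have := hz k h1
  rw [← Function.iterate_succ_apply] at this
  have he : ((k : ℤ) + (m+1)).toNat = (((k+1 : ℕ) : ℤ) + m).toNat := by push_cast; omega
  rw [he] at this
  exact this

lemma abs_of_mem_levelSet (hz : z ∈ levelSet f R (s : ℕ)) :
    (maxMod f)^[s] R ≤ ‖z‖ := by
  have := hz 0 (by positivity)
  simpa using this

lemma fastEscaping_eq : fastEscaping f R = ⋃ L : ℕ, levelSet f R (-(L:ℤ)) := by
  ext z
  constructor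
  · rintro ⟨L, hL⟩
    refine Set.mem_iUnion.mpr ⟨L, ?_⟩
    intro n hn
    obtain ⟨k, rfl⟩ : ∃ k : ℕ, n = k + L := by
      refine ⟨n - L, ?_⟩
      omega
    have := hL k
    have he : (((k + L : ℕ) : ℤ) + -(L:ℤ)).toNat = k := by push_cast; omega
    rw [he]
    exact this
  · intro h
    obtain ⟨L, hL⟩ := Set.mem_iUnion.mp h
    refine ⟨L, fun n => ?_⟩
    have h1 : 0 ≤ ((n + L : ℕ) : ℤ) + -(L:ℤ) := by push_cast; omega
    have := hL (n + L) h1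
    have he : (((n + L : ℕ) : ℤ) + -(L:ℤ)).toNat = n := by push_cast; omega
    rw [he] at this
    exact this

lemma map_fastEscaping (z : ℂ) (hz : f z ∈ fastEscaping f R) : z ∈ fastEscaping f R := by
  obtain ⟨L, hL⟩ := hz
  refine ⟨L + 1, fun n => ?_⟩
  have := hL n
  rw [← Function.iterate_succ_apply] at this
  have he : (n + L).succ = n + (L + 1) := by omega
  rw [he] at this
  exact this

lemma map_compl_fastEscaping (z : ℂ) (hz : z ∉ fastEscaping f R) :
    f z ∉ fastEscaping f R := fun h => hz (map_fastEscaping z h)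

lemma iterate_compl_fastEscaping (z : ℂ) (hz : z ∉ fastEscaping f R) (k : ℕ) :
    f^[k] z ∉ fastEscaping f R := by
  induction k with
  | zero => simpa
  | succ k ih => rw [Function.iterate_succ_apply']; exact map_compl_fastEscaping _ ih

end Levels2

section Topo
variable {Ω S U : Set ℂ} {v x y : ℂ}

/-- A preconnected set avoiding the frontier of an open set is inside or outside. -/
lemma inside_or_outside (hS : IsPreconnected S) (hΩ : IsOpen Ω)
    (hd : S ∩ frontier Ω = ∅) : S ⊆ Ω ∨ S ∩ closure Ω = ∅ := by
  have hd' : ∀ z ∈ S, z ∉ frontier Ω := by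
    intro z hz hfr
    rw [Set.eq_empty_iff_forall_notMem] at hd
    exact hd z ⟨hz, hfr⟩
  have hsub : S ⊆ Ω ∪ (closure Ω)ᶜ := by
    intro z hz
    by_cases hzΩ : z ∈ Ω
    · exact Or.inl hzΩ
    by_cases hzc : z ∈ closure Ω
    · exfalso
      have : z ∈ frontier Ω := by
        rw [frontier, hΩ.interior_eq]
        exact ⟨hzc, hzΩ⟩
      exact hd' z hz this
    · exact Or.inr hzc
  by_cases h1 : (S ∩ Ω).Nonempty
  · left
    by_cases h2 : (S ∩ (closure Ω)ᶜ).Nonempty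
    · exfalso
      obtain ⟨w, hw⟩ := hS Ω (closure Ω)ᶜ hΩ (isClosed_closure.isOpen_compl) hsub h1 h2
      exact hw.2.2 (subset_closure hw.2.1)
    · rw [Set.not_nonempty_iff_eq_empty, Set.eq_empty_iff_forall_notMem] at h2
      intro z hz
      rcases hsub hz with h | h
      · exact h
      · exact absurd ⟨hz, h⟩ (h2 z)
  · right
    rw [Set.not_nonempty_iff_eq_empty] at h1
    rw [Set.eq_empty_iff_forall_notMem]
    intro z hz
    rcases hsub hz.1 with h | h
    · rw [Set.eq_empty_iff_forall_notMem] at h1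
      exact h1 z ⟨hz.1, h⟩
    · exact h hz.2

/-- closure of a connected component of an open set, intersected with the set, is in it -/
lemma closure_ccIn (hU : IsOpen U) (hy : y ∈ closure (connectedComponentIn U v)) (hyU : y ∈ U) :
    y ∈ connectedComponentIn U v := by
  by_cases hvU : v ∈ U
  · have hΩ := isPreconnected_connectedComponentIn (x := v) (F := U)
    have hins : IsPreconnected (insert y (connectedComponentIn U v)) := by
      apply hΩ.subset_closure (Set.subset_insert _ _)
      exact Set.insert_subset_iff.mpr ⟨hy, subset_closure⟩
    have hsub : insert y (connectedComponentIn U v) ⊆ U :=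
      Set.insert_subset_iff.mpr ⟨hyU, connectedComponentIn_subset _ _⟩
    have h1 : insert y (connectedComponentIn U v) ⊆ connectedComponentIn U y :=
      hins.subset_connectedComponentIn (Set.mem_insert _ _) hsub
    have hv : v ∈ connectedComponentIn U y := h1 (Set.mem_insert_of_mem _
      (mem_connectedComponentIn hvU))
    rw [← connectedComponentIn_eq hv]
    exact h1 (Set.mem_insert _ _)
  · rw [connectedComponentIn_eq_empty hvU] at hy
    simp at hy

lemma frontier_ccIn_subset (hU : IsOpen U) (v : ℂ) :
    frontier (connectedComponentIn U v) ⊆ Uᶜ := by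
  intro z hz
  intro hzU
  have hop : IsOpen (connectedComponentIn U v) := hU.connectedComponentIn
  have h1 : z ∈ closure (connectedComponentIn U v) := hz.1
  have h2 : z ∈ connectedComponentIn U v := closure_ccIn hU h1 hzU
  exact hz.2 (by rwa [hop.interior_eq])

end Topo

section Nested

/-- nonempty nested intersection of compacts -/
lemma nested_nonempty {C : ℕ → Set ℂ} (hdec : ∀ n, C (n+1) ⊆ C n)
    (hne : ∀ n, (C n).Nonempty) (hcpt : ∀ n, IsCompact (C n)) :
    (⋂ n, C n).Nonempty :=
  IsCompact.nonempty_iInter_of_sequence_nonempty_isCompact_isClosed C hdec hne (hcpt 0)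
    (fun n => (hcpt n).isClosed)

/-- nested intersection of compact connected sets is preconnected -/
lemma nested_preconnected {C : ℕ → Set ℂ} (hdec : ∀ n, C (n+1) ⊆ C n)
    (hne : ∀ n, (C n).Nonempty) (hcpt : ∀ n, IsCompact (C n))
    (hconn : ∀ n, IsPreconnected (C n)) : IsPreconnected (⋂ n, C n) := by
  set T := ⋂ n, C n with hT
  have hTcpt : IsCompact T := (hcpt 0).of_isClosed_subset
    (isClosed_iInter fun n => (hcpt n).isClosed) (Set.iInter_subset _ 0)
  rw [isPreconnected_iff_subset_of_fully_disjoint_closed hTcpt.isClosed]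
  intro u v hu hv hsub hdisj
  -- u v closed, T ⊆ u ∪ v, disjoint
  have hucpt : IsCompact (T ∩ u) := hTcpt.inter_right hu
  have hvcpt : IsCompact (T ∩ v) := hTcpt.inter_right hv
  -- separate by open sets
  obtain ⟨U, V, hUo, hVo, hUu, hVv, hUV⟩ :=
    SeparatedNhds.of_isCompact_isCompact (hTcpt.inter_right hu) (hTcpt.inter_right hv)
      (by
        rw [Set.disjoint_iff_inter_eq_empty]
        rw [Set.disjoint_iff_inter_eq_empty] at hdisj
        rw [Set.eq_empty_iff_forall_notMem] at hdisj ⊢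
        intro z hz
        exact hdisj z ⟨hz.1.2, hz.2.2⟩)
  -- some C n inside U ∪ V
  have hCn : ∃ n, C n ⊆ U ∪ V := by
    by_contra hc
    push_neg at hc
    have : (⋂ n, C n \ (U ∪ V)).Nonempty := by
      apply nested_nonempty
      · exact fun n => Set.diff_subset_diff_left (hdec n)
      · intro n
        obtain ⟨x, hx1, hx2⟩ := Set.not_subset.mp (hc n)
        exact ⟨x, hx1, hx2⟩
      · exact fun n => (hcpt n).diff (hUo.union hVo)
    obtain ⟨x, hx⟩ := this
    have hxT : x ∈ T := by
      rw [hT, Set.mem_iInter]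
      intro n
      exact (Set.mem_iInter.mp hx n).1
    have hxnot : x ∉ U ∪ V := (Set.mem_iInter.mp hx 0).2
    rcases hsub hxT with h | h
    · exact hxnot (Or.inl (hUu ⟨hxT, h⟩))
    · exact hxnot (Or.inr (hVv ⟨hxT, h⟩))
  obtain ⟨n, hn⟩ := hCn
  -- C n is preconnected inside disjoint opens U V
  by_cases hTu : (T ∩ u).Nonempty
  · left
    -- show T ∩ v = ∅, i.e. T ⊆ u
    by_cases hTv : (T ∩ v).Nonempty
    · exfalso
      have h1 : (C n ∩ U).Nonempty := by
        obtain ⟨x, hx⟩ := hTu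
        exact ⟨x, Set.mem_iInter.mp hx.1 n, hUu hx⟩
      have h2 : (C n ∩ V).Nonempty := by
        obtain ⟨x, hx⟩ := hTv
        exact ⟨x, Set.mem_iInter.mp hx.1 n, hVv hx⟩
      obtain ⟨w, hw⟩ := hconn n U V hUo hVo hn h1 h2
      rw [Set.disjoint_iff_inter_eq_empty, Set.eq_empty_iff_forall_notMem] at hUV
      exact hUV w ⟨hw.2.1, hw.2.2⟩
    · rw [Set.not_nonempty_iff_eq_empty] at hTv
      intro z hz
      rcases hsub hz with h | h
      · exact h
      · exfalso
        rw [Set.eq_empty_iff_forall_notMem] at hTv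
        exact hTv z ⟨hz, h⟩
  · right
    rw [Set.not_nonempty_iff_eq_empty, Set.eq_empty_iff_forall_notMem] at hTu
    intro z hz
    rcases hsub hz with h | h
    · exact absurd ⟨hz, h⟩ (hTu z)
    · exact h

end Nested


section OMT
variable {f : ℂ → ℂ}

lemma isOpenMap_of_transc (hf : TranscEntire f) : IsOpenMap f := by
  have han : AnalyticOnNhd ℂ f Set.univ := Complex.analyticOnNhd_univ_iff_differentiable.mpr hf.1
  rcases han.is_constant_or_isOpen isPreconnected_univ with ⟨w, hw⟩ | h
  · exfalso
    exact hf.2 ⟨Polynomial.C w, fun z => by simp [hw z (Set.mem_univ z)]⟩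
  · intro s hs
    exact h s (Set.subset_univ s) hs

lemma isOpenMap_iterate (hf : TranscEntire f) (k : ℕ) : IsOpenMap (f^[k]) := by
  induction k with
  | zero => simpa using IsOpenMap.id
  | succ k ih =>
      rw [Function.iterate_succ']
      exact (isOpenMap_of_transc hf).comp ih
end OMT

/-- hole of level `-L` at `v` -/
noncomputable def Hole (f : ℂ → ℂ) (R : ℝ) (v : ℂ) (L : ℕ) : Set ℂ :=
  connectedComponentIn (levelSet f R (-(L:ℤ)))ᶜ v

section Holes
variable {f : ℂ → ℂ} {R : ℝ} {G : ℕ → Set ℂ} {v : ℂ}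

lemma notin_level_of_notA {z : ℂ} (hz : z ∉ fastEscaping f R) (L : ℕ) :
    z ∈ (levelSet f R (-(L:ℤ)))ᶜ := by
  intro hmem
  exact hz (by rw [fastEscaping_eq]; exact Set.mem_iUnion.mpr ⟨L, hmem⟩)

lemma compl_subset_compl_level {m : ℤ} (hR : 0 < R) (hM : ∀ r ≥ R, r < maxMod f r)
    (hm : m ≤ 0) : (levelSet f R m)ᶜ ⊆ (levelSet f R 0)ᶜ := by
  intro z hz hz0
  exact hz (levelSet_antitone hR hM hm hz0)

lemma Hole_isOpen (hf : Differentiable ℂ f) (L : ℕ) : IsOpen (Hole f R v L) :=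
  ((isClosed_levelSet hf _).isOpen_compl).connectedComponentIn

lemma Hole_mem (hv : v ∉ fastEscaping f R) (L : ℕ) : v ∈ Hole f R v L :=
  mem_connectedComponentIn (notin_level_of_notA hv L)

lemma Hole_preconn (L : ℕ) : IsPreconnected (Hole f R v L) :=
  isPreconnected_connectedComponentIn

lemma Hole_subset (L : ℕ) : Hole f R v L ⊆ (levelSet f R (-(L:ℤ)))ᶜ :=
  connectedComponentIn_subset _ _

lemma Hole_mono (hR : 0 < R) (hM : ∀ r ≥ R, r < maxMod f r) (L : ℕ) :
    Hole f R v (L+1) ⊆ Hole f R v L := by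
  apply connectedComponentIn_mono
  intro z hz hz'
  exact hz (levelSet_antitone hR hM (by push_cast; omega) hz')

lemma frontier_Hole (hf : Differentiable ℂ f) (L : ℕ) :
    frontier (Hole f R v L) ⊆ levelSet f R (-(L:ℤ)) := by
  intro z hz
  have := frontier_ccIn_subset ((isClosed_levelSet hf (-(L:ℤ))).isOpen_compl) v hz
  simpa using this

/-- web trap: preconnected sets avoiding `A_R` are inside some `G N` -/
lemma web_trap (hGprop : ∀ n, IsOpen (G n) ∧ IsConnected (G n) ∧ Bornology.IsBounded (G n) ∧
      SimplyConnectedSpace (G n) ∧ G n ⊆ G (n + 1) ∧ frontier (G n) ⊆ levelSet f R 0)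
    (hGU : (⋃ n, G n) = Set.univ) {S : Set ℂ} (hS : IsPreconnected S)
    (hdisj : ∀ z ∈ S, z ∉ levelSet f R 0) {x : ℂ} (hx : x ∈ S) {N : ℕ} (hxN : x ∈ G N) :
    S ⊆ G N := by
  have hfr : S ∩ frontier (G N) = ∅ := by
    rw [Set.eq_empty_iff_forall_notMem]
    intro z hz
    exact hdisj z hz.1 ((hGprop N).2.2.2.2.2 hz.2)
  rcases inside_or_outside hS (hGprop N).1 hfr with h | h
  · exact h
  · exfalso
    rw [Set.eq_empty_iff_forall_notMem] at h
    exact h x ⟨hx, subset_closure hxN⟩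

lemma Hole_bounded (hf : Differentiable ℂ f) (hR : 0 < R) (hM : ∀ r ≥ R, r < maxMod f r)
    (hGprop : ∀ n, IsOpen (G n) ∧ IsConnected (G n) ∧ Bornology.IsBounded (G n) ∧
      SimplyConnectedSpace (G n) ∧ G n ⊆ G (n + 1) ∧ frontier (G n) ⊆ levelSet f R 0)
    (hGU : (⋃ n, G n) = Set.univ) (hv : v ∉ fastEscaping f R) (L : ℕ) :
    Bornology.IsBounded (Hole f R v L) := by
  obtain ⟨N, hN⟩ : ∃ N, v ∈ G N := Set.mem_iUnion.mp (by rw [hGU]; trivial)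
  have h1 : Hole f R v L ⊆ G N := by
    apply web_trap hGprop hGU (Hole_preconn L) ?_ (Hole_mem hv L) hN
    intro z hz hz0
    exact (Hole_subset L hz) (levelSet_antitone hR hM (by omega) hz0)
  exact ((hGprop N).2.2.1).subset h1

end Holes

section ImageH
variable {f : ℂ → ℂ} {R : ℝ} {G : ℕ → Set ℂ} {v : ℂ}

/-- key identity: `f(H(v,L+1)) = H(f v, L)` -/
lemma image_Hole (hf : TranscEntire f) (hR : 0 < R) (hM : ∀ r ≥ R, r < maxMod f r)
    (hGprop : ∀ n, IsOpen (G n) ∧ IsConnected (G n) ∧ Bornology.IsBounded (G n) ∧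
      SimplyConnectedSpace (G n) ∧ G n ⊆ G (n + 1) ∧ frontier (G n) ⊆ levelSet f R 0)
    (hGU : (⋃ n, G n) = Set.univ) (hv : v ∉ fastEscaping f R) (L : ℕ) :
    f '' Hole f R v (L+1) = Hole f R (f v) L := by
  set Ω := Hole f R v (L+1) with hΩdef
  have hfd := hf.1
  have hΩo : IsOpen Ω := Hole_isOpen hfd _
  have hΩb : Bornology.IsBounded Ω := Hole_bounded hfd hR hM hGprop hGU hv _
  have hclc : IsCompact (closure Ω) := Metric.isCompact_of_isClosed_isBounded
    isClosed_closure hΩb.closure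
  have hfΩo : IsOpen (f '' Ω) := isOpenMap_of_transc hf Ω hΩo
  have hfv' : f v ∉ fastEscaping f R := fun h => hv (map_fastEscaping v h)
  -- f '' Ω avoids level -L
  have hfΩsub : f '' Ω ⊆ (levelSet f R (-(L:ℤ)))ᶜ := by
    rintro x ⟨u, hu, rfl⟩ hx
    have : u ∈ levelSet f R (-((L:ℤ)+1)) := by
      apply levelSet_unmap u _ (by omega)
      have he : (-((L:ℤ)+1)) + 1 = -(L:ℤ) := by ring
      rw [he]
      exact hx
    have he2 : (-((L:ℤ)+1)) = -(((L+1):ℕ):ℤ) := by push_cast; ring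
    rw [he2] at this
    exact (Hole_subset (v := v) (L+1)) hu this
  -- frontier of f '' Ω is in level -L
  have hfr : frontier (f '' Ω) ⊆ levelSet f R (-(L:ℤ)) := by
    intro x hx
    have hxcl : x ∈ closure (f '' Ω) := hx.1
    have h1 : closure (f '' Ω) ⊆ f '' closure Ω := by
      have : IsCompact (f '' closure Ω) := hclc.image hfd.continuous
      apply closure_minimal _ this.isClosed
      exact Set.image_mono subset_closure
    obtain ⟨u, hu, rfl⟩ := h1 hxcl
    have hunot : u ∉ Ω := by
      intro huΩ
      apply hx.2
      rw [hfΩo.interior_eq]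
      exact Set.mem_image_of_mem f huΩ
    have hufr : u ∈ frontier Ω := ⟨hu, by rwa [hΩo.interior_eq]⟩
    have hlev : u ∈ levelSet f R (-(((L+1):ℕ):ℤ)) := frontier_Hole hfd (L+1) hufr
    have := levelSet_map u _ hlev
    have he : (-(((L+1):ℕ):ℤ) + 1) = -(L:ℤ) := by push_cast; ring
    rwa [he] at this
  -- forward inclusion
  have hsub1 : f '' Ω ⊆ Hole f R (f v) L := by
    apply IsPreconnected.subset_connectedComponentIn
    · exact (Hole_preconn (L+1)).image f hfd.continuous.continuousOn
    · exact Set.mem_image_of_mem f (Hole_mem hv (L+1))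
    · exact hfΩsub
  -- reverse inclusion
  have hsub2 : Hole f R (f v) L ⊆ f '' Ω := by
    have hdisj : Hole f R (f v) L ∩ frontier (f '' Ω) = ∅ := by
      rw [Set.eq_empty_iff_forall_notMem]
      intro z hz
      exact (Hole_subset (v := f v) L) hz.1 (hfr hz.2)
    rcases inside_or_outside (Hole_preconn L) hfΩo hdisj with h | h
    · exact h
    · exfalso
      rw [Set.eq_empty_iff_forall_notMem] at h
      exact h (f v) ⟨Hole_mem hfv' L,
        subset_closure (Set.mem_image_of_mem f (Hole_mem hv (L+1)))⟩
  exact le_antisymm hsub1 hsub2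

lemma iterate_notA {z : ℂ} (hz : z ∉ fastEscaping f R) (k : ℕ) :
    f^[k] z ∉ fastEscaping f R := iterate_compl_fastEscaping z hz k

lemma iterate_image_Hole (hf : TranscEntire f) (hR : 0 < R) (hM : ∀ r ≥ R, r < maxMod f r)
    (hGprop : ∀ n, IsOpen (G n) ∧ IsConnected (G n) ∧ Bornology.IsBounded (G n) ∧
      SimplyConnectedSpace (G n) ∧ G n ⊆ G (n + 1) ∧ frontier (G n) ⊆ levelSet f R 0)
    (hGU : (⋃ n, G n) = Set.univ) (hv : v ∉ fastEscaping f R) (M t : ℕ) :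
    f^[t] '' Hole f R v (M + t) = Hole f R (f^[t] v) M := by
  induction t generalizing v with
  | zero => simp
  | succ t ih =>
      have h1 : f '' Hole f R v (M + t + 1) = Hole f R (f v) (M + t) :=
        image_Hole hf hR hM hGprop hGU hv (M + t)
      have h2 := ih (v := f v) (fun h => hv (map_fastEscaping v h))
      calc f^[t+1] '' Hole f R v (M + (t+1))
          = f^[t] '' (f '' Hole f R v (M + t + 1)) := by
            rw [← Set.image_comp, ← Function.iterate_succ]
            rfl
          _ = f^[t] '' Hole f R (f v) (M + t) := by rw [h1]
          _ = Hole f R (f^[t] (f v)) M := h2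
          _ = Hole f R (f^[t+1] v) M := by rw [Function.iterate_succ_apply]

end ImageH

section TMain
variable {f : ℂ → ℂ} {R : ℝ} {G : ℕ → Set ℂ} {z₀ : ℂ}

lemma T_avoids_A (hf : TranscEntire f) (hR : 0 < R) (hM : ∀ r ≥ R, r < maxMod f r)
    (hGprop : ∀ n, IsOpen (G n) ∧ IsConnected (G n) ∧ Bornology.IsBounded (G n) ∧
      SimplyConnectedSpace (G n) ∧ G n ⊆ G (n + 1) ∧ frontier (G n) ⊆ levelSet f R 0)
    (hGU : (⋃ n, G n) = Set.univ) (hz₀ : z₀ ∉ fastEscaping f R)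
    {p : ℂ} (hpT : p ∈ ⋂ L : ℕ, closure (Hole f R z₀ L)) :
    p ∉ fastEscaping f R := by
  intro hpA
  have hfd := hf.1
  -- p is in some level -ℓ
  rw [fastEscaping_eq] at hpA
  obtain ⟨ℓ, hpl⟩ := Set.mem_iUnion.mp hpA
  -- basepoint data
  obtain ⟨N₀, hN₀⟩ : ∃ N, z₀ ∈ G N := Set.mem_iUnion.mp (by rw [hGU]; trivial)
  obtain ⟨ρ₀, hρ₀⟩ := ((hGprop N₀).2.2.1).subset_closedBall 0
  set ρ : ℝ := max ρ₀ R with hρdef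
  have hρR : R ≤ ρ := le_max_right _ _
  have hρ0 : 0 ≤ ρ := le_trans hR.le hρR
  have hclG : closure (G N₀) ⊆ Metric.closedBall 0 ρ := by
    apply closure_minimal _ Metric.isClosed_closedBall
    exact hρ₀.trans (Metric.closedBall_subset_closedBall (le_max_left _ _))
  obtain ⟨c₀, hc₀⟩ := Mi_unbounded hfd hR hM ρ
  set L : ℕ := ℓ + c₀ + 2 with hLdef
  -- slow time for z₀
  have hz₀L : z₀ ∉ levelSet f R (-(L:ℤ)) := notin_level_of_notA hz₀ L
  simp only [levelSet, Set.mem_setOf_eq] at hz₀L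
  push_neg at hz₀L
  obtain ⟨s, hs0, hslow⟩ := hz₀L
  have hsL : L ≤ s := by omega
  set d : ℕ := s - L with hddef
  have hsd : s = d + L := by omega
  have htn : ((s:ℤ) + -(L:ℤ)).toNat = d := by omega
  rw [htn] at hslow
  -- propagation of slowness
  have hprop : ∀ k, ‖f^[s+k] z₀‖ ≤ (maxMod f)^[d+k] R := by
    intro k
    induction k with
    | zero => simpa using hslow.le
    | succ k ih =>
        have h1 : f^[s+(k+1)] z₀ = f (f^[s+k] z₀) := by
          have : s+(k+1) = (s+k) + 1 := by omega
          rw [this, Function.iterate_succ_apply']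
        rw [h1]
        calc ‖f (f^[s+k] z₀)‖ ≤ maxMod f (‖f^[s+k] z₀‖) :=
              abs_apply_le_maxMod hfd _
          _ ≤ maxMod f ((maxMod f)^[d+k] R) :=
              maxMod_mono hfd (norm_nonneg _) ih
          _ = (maxMod f)^[d+(k+1)] R := by
              have : d+(k+1) = (d+k) + 1 := by omega
              rw [this, Function.iterate_succ_apply']
  set t : ℕ := s + (ℓ + c₀ + 1) with htdef
  have htz₀ : ‖f^[t] z₀‖ < (maxMod f)^[s] R := by
    have h1 := hprop (ℓ + c₀ + 1)
    have h2 : d + (ℓ + c₀ + 1) + 1 = s := by omega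
    calc ‖f^[t] z₀‖ ≤ (maxMod f)^[d + (ℓ+c₀+1)] R := h1
      _ < (maxMod f)^[s] R := by
          have := Mi_strictMono (f := f) hR hM (a := d + (ℓ+c₀+1)) (b := s) (by omega)
          exact this
  -- the loop image Λ
  set Λ : Set ℂ := f^[s] '' (G N₀) with hΛdef
  have hΛo : IsOpen Λ := isOpenMap_iterate hf s (G N₀) (hGprop N₀).1
  have hGcpt : IsCompact (closure (G N₀)) := Metric.isCompact_of_isClosed_isBounded
    isClosed_closure ((hGprop N₀).2.2.1).closure
  have hclΛ : closure Λ ⊆ f^[s] '' closure (G N₀) := by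
    apply closure_minimal _ ((hGcpt.image (hfd.continuous.iterate s)).isClosed)
    exact Set.image_mono subset_closure
  have hΛfr : frontier Λ ⊆ levelSet f R ((s:ℕ):ℤ) := by
    intro x hx
    obtain ⟨u, hu, rfl⟩ := hclΛ hx.1
    have hunot : u ∉ G N₀ := by
      intro huG
      apply hx.2
      rw [hΛo.interior_eq]
      exact Set.mem_image_of_mem _ huG
    have hufr : u ∈ frontier (G N₀) := ⟨hu, by rwa [(hGprop N₀).1.interior_eq]⟩
    exact levelSet_iterate_map u ((hGprop N₀).2.2.2.2.2 hufr) s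
  have hΛfrb : ∀ x ∈ frontier Λ, (maxMod f)^[s] R ≤ ‖x‖ := by
    intro x hx
    exact abs_of_mem_levelSet (hΛfr hx)
  -- ball inside Λ
  set B : Set ℂ := Metric.ball 0 ((maxMod f)^[s] R) with hBdef
  have hBfr : B ∩ frontier Λ = ∅ := by
    rw [Set.eq_empty_iff_forall_notMem]
    rintro x ⟨hxB, hxfr⟩
    rw [hBdef, Metric.mem_ball, Complex.dist_eq, sub_zero] at hxB
    exact absurd hxB (not_lt.mpr (hΛfrb x hxfr))
  have hfsz₀B : f^[s] z₀ ∈ B := by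
    rw [hBdef, Metric.mem_ball, Complex.dist_eq, sub_zero]
    calc ‖f^[s] z₀‖ < (maxMod f)^[d] R := hslow
      _ ≤ (maxMod f)^[s] R := Mi_mono hR hM (by omega)
  have hfsz₀Λ : f^[s] z₀ ∈ Λ := Set.mem_image_of_mem _ hN₀
  have hBΛ : B ⊆ Λ := by
    rcases inside_or_outside ((convex_ball (0:ℂ) _).isPreconnected) hΛo hBfr with h | h
    · exact h
    · exfalso
      rw [Set.eq_empty_iff_forall_notMem] at h
      exact h (f^[s] z₀) ⟨hfsz₀B, subset_closure hfsz₀Λ⟩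
  -- the hole X at f^[t] z₀
  have hftz₀A : f^[t] z₀ ∉ fastEscaping f R := iterate_notA hz₀ t
  set X : Set ℂ := Hole f R (f^[t] z₀) 0 with hXdef
  have hXfr : X ∩ frontier Λ = ∅ := by
    rw [Set.eq_empty_iff_forall_notMem]
    rintro x ⟨hxX, hxfr⟩
    have h1 : x ∈ (levelSet f R (-(0:ℕ):ℤ))ᶜ := Hole_subset 0 hxX
    apply h1
    have h2 : levelSet f R ((s:ℕ):ℤ) ⊆ levelSet f R (-(0:ℕ):ℤ) := by
      apply levelSet_antitone hR hM
      omega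
    exact h2 (hΛfr hxfr)
  rcases inside_or_outside (Hole_preconn 0) hΛo hXfr with hin | hout
  · -- X ⊆ Λ : bound |f^[t] p|
    have hftp : f^[t] p ∈ closure X := by
      have h1 : p ∈ closure (Hole f R z₀ t) := by
        have := Set.mem_iInter.mp hpT t
        exact this
      have h2 : f^[t] p ∈ f^[t] '' closure (Hole f R z₀ t) := Set.mem_image_of_mem _ h1
      have h3 : f^[t] '' closure (Hole f R z₀ t) ⊆ closure (f^[t] '' Hole f R z₀ t) :=
        image_closure_subset_closure_image (hfd.continuous.iterate t)
      have h4 : f^[t] '' Hole f R z₀ t = X := by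
        rw [hXdef]
        have := iterate_image_Hole hf hR hM hGprop hGU hz₀ 0 t
        simpa using this
      rw [← h4]
      exact h3 h2
    have hup : f^[t] p ∈ f^[s] '' closure (G N₀) := by
      apply hclΛ
      apply closure_mono hin
      exact hftp
    obtain ⟨u, hu, hupeq⟩ := hup
    have huρ : ‖u‖ ≤ ρ := by
      have := hclG hu
      rwa [Metric.mem_closedBall, Complex.dist_eq, sub_zero] at this
    have hupper : ‖f^[t] p‖ ≤ (maxMod f)^[s+c₀] R := by
      rw [← hupeq]
      calc ‖f^[s] u‖ ≤ (maxMod f)^[s] ρ := abs_iterate_le hfd hρ0 huρ s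
        _ ≤ (maxMod f)^[s] ((maxMod f)^[c₀] R) :=
            Mi_iter_mono hfd hρ0 hc₀.le s
        _ = (maxMod f)^[s+c₀] R := by rw [← Function.iterate_add_apply]
    have hlower : (maxMod f)^[s+c₀+1] R ≤ ‖f^[t] p‖ := by
      have h1 : 0 ≤ (t:ℤ) + -(ℓ:ℤ) := by omega
      have := hpl t h1
      have he : ((t:ℤ) + -(ℓ:ℤ)).toNat = s + c₀ + 1 := by omega
      rwa [he] at this
    have : s + c₀ + 1 ≤ s + c₀ := (Mi_le_iff hR hM).mp (hlower.trans hupper)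
    omega
  · -- X ∩ closure Λ = ∅ : but f^[t] z₀ ∈ X ∩ B ⊆ closure Λ
    rw [Set.eq_empty_iff_forall_notMem] at hout
    apply hout (f^[t] z₀)
    constructor
    · exact Hole_mem hftz₀A 0
    · apply subset_closure
      apply hBΛ
      rw [hBdef, Metric.mem_ball, Complex.dist_eq, sub_zero]
      exact htz₀

end TMain

/-- the image of a component of `A(f)ᶜ` is a component of `A(f)ᶜ`. -/
theorem stmt_4 (f : ℂ → ℂ) (R : ℝ) (hf : TranscEntire f) (hR : 0 < R)
    (hM : ∀ r ≥ R, r < maxMod f r) (hweb : SpidersWeb (levelSet f R 0))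
    (K : Set ℂ) (hK : IsCompOf K (fastEscaping f R)ᶜ) :
    IsCompOf (f '' K) (fastEscaping f R)ᶜ := by
  obtain ⟨-, G, hGprop, hGU⟩ := hweb
  obtain ⟨z₀, hz₀, hKeq⟩ := hK
  have hfd := hf.1
  have hz₀A : z₀ ∉ fastEscaping f R := hz₀
  have hfz₀A : f z₀ ∉ fastEscaping f R := map_compl_fastEscaping z₀ hz₀A
  refine ⟨f z₀, hfz₀A, ?_⟩
  set A := fastEscaping f R with hAdef
  set C := connectedComponentIn Aᶜ (f z₀) with hCdef
  have hKsub : K ⊆ Aᶜ := by rw [hKeq]; exact connectedComponentIn_subset _ _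
  have hz₀K : z₀ ∈ K := by rw [hKeq]; exact mem_connectedComponentIn hz₀A
  -- forward inclusion
  have hfwd : f '' K ⊆ C := by
    apply IsPreconnected.subset_connectedComponentIn
    · rw [hKeq]
      exact isPreconnected_connectedComponentIn.image f hfd.continuous.continuousOn
    · exact Set.mem_image_of_mem f hz₀K
    · rintro x ⟨u, hu, rfl⟩
      exact map_compl_fastEscaping u (hKsub hu)
  -- the nested set T
  set T : Set ℂ := ⋂ L : ℕ, closure (Hole f R z₀ L) with hTdef
  have hHcpt : ∀ L : ℕ, IsCompact (closure (Hole f R z₀ L)) := fun L =>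
    Metric.isCompact_of_isClosed_isBounded isClosed_closure
      (Hole_bounded hfd hR hM hGprop hGU hz₀A L).closure
  have hHne : ∀ L : ℕ, (closure (Hole f R z₀ L)).Nonempty := fun L =>
    ⟨z₀, subset_closure (Hole_mem hz₀A L)⟩
  have hHdec : ∀ L : ℕ, closure (Hole f R z₀ (L+1)) ⊆ closure (Hole f R z₀ L) := fun L =>
    closure_mono (Hole_mono hR hM L)
  have hTconn : IsPreconnected T :=
    nested_preconnected hHdec hHne hHcpt (fun L => (Hole_preconn L).closure)
  have hTA : ∀ q ∈ T, q ∉ A := fun q hq => T_avoids_A hf hR hM hGprop hGU hz₀A hq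
  have hz₀T : z₀ ∈ T := Set.mem_iInter.mpr fun L => subset_closure (Hole_mem hz₀A L)
  have hTK : T ⊆ K := by
    rw [hKeq]
    exact hTconn.subset_connectedComponentIn hz₀T hTA
  -- reverse inclusion
  apply le_antisymm hfwd
  intro w hw
  have hwA : w ∉ A := connectedComponentIn_subset _ _ hw
  -- C is inside every hole of f z₀
  have hCH : ∀ M : ℕ, C ⊆ Hole f R (f z₀) M := by
    intro M
    have hCpre : IsPreconnected C := isPreconnected_connectedComponentIn
    have hCmem : f z₀ ∈ C := mem_connectedComponentIn (show f z₀ ∈ Aᶜ from hfz₀A)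
    have hCsub : C ⊆ (levelSet f R (-(M:ℤ)))ᶜ := by
      intro x hx
      exact notin_level_of_notA (connectedComponentIn_subset _ _ hx) M
    exact hCpre.subset_connectedComponentIn hCmem hCsub
  -- fibers of w in closures of holes
  set F : ℕ → Set ℂ := fun L => f ⁻¹' {w} ∩ closure (Hole f R z₀ (L+1)) with hFdef
  have hFcpt : ∀ L, IsCompact (F L) := fun L =>
    ((hHcpt (L+1)).inter_left (isClosed_singleton.preimage hfd.continuous))
  have hFne : ∀ L, (F L).Nonempty := by
    intro L
    have h1 : w ∈ Hole f R (f z₀) L := hCH L hw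
    rw [← image_Hole hf hR hM hGprop hGU hz₀A L] at h1
    obtain ⟨u, hu, huw⟩ := h1
    exact ⟨u, by simpa using huw, subset_closure hu⟩
  have hFdec : ∀ L, F (L+1) ⊆ F L := fun L =>
    Set.inter_subset_inter_right _ (hHdec (L+1))
  obtain ⟨z', hz'⟩ := nested_nonempty hFdec hFne hFcpt
  have hz'w : f z' = w := by
    have := (Set.mem_iInter.mp hz' 0).1
    simpa using this
  have hz'T : z' ∈ T := by
    rw [hTdef]
    rw [Set.mem_iInter]
    intro L
    have := (Set.mem_iInter.mp hz' L).2
    exact hHdec L this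
  exact ⟨z', hTK hz'T, hz'w⟩
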